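/- arXiv:math/9807157 — 3 statements merged into one kernel-verified Lean document; each statement's English description precedes it below -/
import Mathlib

section
/- Let q be a nonzero complex number, let n ≥ 2 be an integer, and let A₁, …, A_{n−1} be pairwise distinct nonzero complex numbers, B₁, …, B_n pairwise distinct nonzero complex numbers such that A_j ≠ q⁻⁴B_i for all j ∈ {1, …, n−1} and i ∈ {1, …, n}, and let C₁, …, C_{n+1}, D₁, …, D_{n−2} be arbitrary complex numbers. Then ∑_{j=1}^{n−1} ( ∏_{i=1}^{n−2} (A_j − q⁻²D_i) · ∏_{i=1}^{n+1} (A_j − q⁻²C_i) ) / ( A_j · ∏_{i≠j, i=1}^{n−1} (A_j − A_i) · ∏_{i=1}^{n} (A_j − q⁻⁴B_i) ) + ∑_{l=1}^{n} ( ∏_{i=1}^{n+1} (B_l − q²C_i) · ∏_{i=1}^{n−2} (B_l − q²D_i) ) / ( B_l · ∏_{i≠l, i=1}^{n} (B_l − B_i) · ∏_{i=1}^{n−1} (B_l − q⁴A_i) ) + q² · ( ∏_{i=1}^{n−2} D_i · ∏_{i=1}^{n+1} C_i ) / ( ∏_{i=1}^{n−1} A_i · ∏_{i=1}^{n} B_i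 ) − 1 = 0. (Identity (A19), obtained by applying the residue theorem to the rational function f(z) = ∏_{i=1}^{n−2}(z − q⁻²D_i)·∏_{i=1}^{n+1}(z − q⁻²C_i) / ( z·∏_{i=1}^{n−1}(z − A_i)·∏_{i=1}^{n}(z − q⁻⁴B_i) ).) -/
open Polynomial Finset

lemma lagrange_coeff_sum {ι : Type*} [DecidableEq ι] {s : Finset ι} {v : ι → ℂ}
    (hvs : Set.InjOn v s) (P : ℂ[X]) (hP : P.degree < s.card) :
    ∑ i ∈ s, P.eval (v i) / ∏ j ∈ s.erase i, (v i - v j) = P.coeff (s.card - 1) := by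
  conv_rhs => rw [Lagrange.eq_interpolate hvs hP]
  rw [Lagrange.interpolate_apply, Polynomial.finset_sum_coeff]
  refine Finset.sum_congr rfl fun i hi => ?_
  rw [Polynomial.coeff_C_mul]
  have hb : (Lagrange.basis s v i).coeff (s.card - 1) = (∏ j ∈ s.erase i, (v i - v j))⁻¹ := by
    have hnd := Lagrange.natDegree_basis hvs hi
    rw [← hnd, ← Polynomial.leadingCoeff, Lagrange.basis, Polynomial.leadingCoeff_prod,
      ← Finset.prod_inv_distrib]
    refine Finset.prod_congr rfl fun j hj => ?_
    rw [Lagrange.basisDivisor]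
    simp [Polynomial.leadingCoeff_mul, Polynomial.leadingCoeff_X_sub_C]
  rw [hb, div_eq_mul_inv]

/-- Identity (A19). -/
theorem identity_A19 (q : ℂ) (hq : q ≠ 0) (n : ℕ) (hn : 2 ≤ n)
    (A B C D : ℕ → ℂ)
    (hA0 : ∀ j ∈ Finset.Icc 1 (n - 1), A j ≠ 0)
    (hAA : ∀ j ∈ Finset.Icc 1 (n - 1), ∀ i ∈ Finset.Icc 1 (n - 1), j ≠ i → A j ≠ A i)
    (hB0 : ∀ i ∈ Finset.Icc 1 n, B i ≠ 0)
    (hBB : ∀ l ∈ Finset.Icc 1 n, ∀ i ∈ Finset.Icc 1 n, l ≠ i → B l ≠ B i)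
    (hAB : ∀ j ∈ Finset.Icc 1 (n - 1), ∀ i ∈ Finset.Icc 1 n, A j ≠ (q ^ 4)⁻¹ * B i) :
    (∑ j ∈ Finset.Icc 1 (n - 1),
      ((∏ i ∈ Finset.Icc 1 (n - 2), (A j - (q ^ 2)⁻¹ * D i)) *
          ∏ i ∈ Finset.Icc 1 (n + 1), (A j - (q ^ 2)⁻¹ * C i)) /
        (A j * (∏ i ∈ (Finset.Icc 1 (n - 1)).erase j, (A j - A i)) *
          ∏ i ∈ Finset.Icc 1 n, (A j - (q ^ 4)⁻¹ * B i)))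
    + (∑ l ∈ Finset.Icc 1 n,
      ((∏ i ∈ Finset.Icc 1 (n + 1), (B l - q ^ 2 * C i)) *
          ∏ i ∈ Finset.Icc 1 (n - 2), (B l - q ^ 2 * D i)) /
        (B l * (∏ i ∈ (Finset.Icc 1 n).erase l, (B l - B i)) *
          ∏ i ∈ Finset.Icc 1 (n - 1), (B l - q ^ 4 * A i)))
    + q ^ 2 * ((∏ i ∈ Finset.Icc 1 (n - 2), D i) * ∏ i ∈ Finset.Icc 1 (n + 1), C i) /
        ((∏ i ∈ Finset.Icc 1 (n - 1), A i) * ∏ i ∈ Finset.Icc 1 n, B i)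
    - 1 = 0 := by
  have hq2 : (q ^ 2 : ℂ) ≠ 0 := pow_ne_zero _ hq
  have hq4 : (q ^ 4 : ℂ) ≠ 0 := pow_ne_zero _ hq
  have hk4 : ((q ^ 4)⁻¹ : ℂ) ≠ 0 := inv_ne_zero hq4
  -- node set
  set sA : Finset ℕ := Finset.Icc 1 (n - 1) with hsA
  set sB : Finset ℕ := (Finset.Icc 1 n).image (· + n) with hsB
  set v : ℕ → ℂ := fun k => if k = 0 then 0 else if k ≤ n - 1 then A k else (q ^ 4)⁻¹ * B (k - n)
    with hv
  have v0 : v 0 = 0 := by simp [hv]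
  have vA : ∀ k, 1 ≤ k → k ≤ n - 1 → v k = A k := by
    intro k h1 h2
    simp only [hv]
    split_ifs with ha hb
    all_goals first | rfl | omega
  have vB : ∀ l, 1 ≤ l → v (l + n) = (q ^ 4)⁻¹ * B l := by
    intro l hl
    simp only [hv]
    split_ifs with ha hb
    · omega
    · exact absurd hb (by omega)
    · norm_num
  set s : Finset ℕ := insert 0 (sA ∪ sB) with hs
  have h0 : (0 : ℕ) ∉ sA ∪ sB := by
    simp only [hsA, hsB, Finset.mem_union, Finset.mem_Icc, Finset.mem_image, not_or]
    constructor
    · omega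
    · rintro ⟨l, hl, hl0⟩
      omega
  have hd : Disjoint sA sB := by
    rw [Finset.disjoint_left]
    intro x hx hx'
    simp only [hsA, Finset.mem_Icc] at hx
    simp only [hsB, Finset.mem_image, Finset.mem_Icc] at hx'
    obtain ⟨l, hl, rfl⟩ := hx'
    omega
  have hinj : ∀ a ∈ Finset.Icc 1 n, ∀ b ∈ Finset.Icc 1 n, a + n = b + n → a = b := by
    intro a _ b _ h; omega
  have cardA : sA.card = n - 1 := by simp [hsA]
  have cardB : sB.card = n := by
    rw [hsB, Finset.card_image_of_injective _ (add_left_injective n)]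
    simp
  have cards : s.card = 2 * n := by
    rw [hs, Finset.card_insert_of_notMem h0, Finset.card_union_of_disjoint hd, cardA, cardB]
    omega
  -- membership description
  have hmem : ∀ x ∈ s, x = 0 ∨ (1 ≤ x ∧ x ≤ n - 1) ∨ ∃ l, 1 ≤ l ∧ l ≤ n ∧ x = l + n := by
    intro x hx
    simp only [hs, hsA, hsB, Finset.mem_insert, Finset.mem_union, Finset.mem_Icc,
      Finset.mem_image] at hx
    rcases hx with rfl | ⟨h1, h2⟩ | ⟨l, hl, rfl⟩
    · exact Or.inl rfl
    · exact Or.inr (Or.inl ⟨h1, h2⟩)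
    · exact Or.inr (Or.inr ⟨l, hl.1, hl.2, rfl⟩)
  -- injectivity
  have hvs : Set.InjOn v s := by
    intro x hx y hy hxy
    simp only [Finset.mem_coe] at hx hy
    have hAm : ∀ k, 1 ≤ k → k ≤ n - 1 → k ∈ Finset.Icc 1 (n - 1) := by
      intro k h1 h2; exact Finset.mem_Icc.mpr ⟨h1, h2⟩
    have hBm : ∀ l, 1 ≤ l → l ≤ n → l ∈ Finset.Icc 1 n := by
      intro l h1 h2; exact Finset.mem_Icc.mpr ⟨h1, h2⟩
    rcases hmem x hx with rfl | ⟨hx1, hx2⟩ | ⟨l, hl1, hl2, rfl⟩ <;>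
      rcases hmem y hy with rfl | ⟨hy1, hy2⟩ | ⟨m, hm1, hm2, rfl⟩
    · rfl
    · rw [v0, vA y hy1 hy2] at hxy
      exact absurd hxy.symm (hA0 y (hAm y hy1 hy2))
    · rw [v0, vB m hm1] at hxy
      exact absurd hxy.symm (mul_ne_zero hk4 (hB0 m (hBm m hm1 hm2)))
    · rw [v0, vA x hx1 hx2] at hxy
      exact absurd hxy (hA0 x (hAm x hx1 hx2))
    · by_contra h
      exact hAA x (hAm x hx1 hx2) y (hAm y hy1 hy2) h (by rw [← vA x hx1 hx2, ← vA y hy1 hy2, hxy])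
    · rw [vA x hx1 hx2, vB m hm1] at hxy
      exact absurd hxy (hAB x (hAm x hx1 hx2) m (hBm m hm1 hm2))
    · rw [v0, vB l hl1] at hxy
      exact absurd hxy (mul_ne_zero hk4 (hB0 l (hBm l hl1 hl2)))
    · rw [vA y hy1 hy2, vB l hl1] at hxy
      exact absurd hxy.symm (hAB y (hAm y hy1 hy2) l (hBm l hl1 hl2))
    · rw [vB l hl1, vB m hm1] at hxy
      have hBlm : B l = B m := mul_left_cancel₀ hk4 hxy
      have : l = m := by
        by_contra h
        exact hBB l (hBm l hl1 hl2) m (hBm m hm1 hm2) h hBlm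
      omega
  -- the polynomial
  set P : ℂ[X] := (∏ i ∈ Finset.Icc 1 (n - 2), (X - Polynomial.C ((q ^ 2)⁻¹ * D i))) *
      ∏ i ∈ Finset.Icc 1 (n + 1), (X - Polynomial.C ((q ^ 2)⁻¹ * C i)) with hP
  have hPm : P.Monic :=
    (monic_prod_of_monic _ _ fun i _ => monic_X_sub_C _).mul
      (monic_prod_of_monic _ _ fun i _ => monic_X_sub_C _)
  have hPdeg : P.natDegree = 2 * n - 1 := by
    rw [hP, Polynomial.natDegree_mul (monic_prod_of_monic _ _ fun i _ => monic_X_sub_C _).ne_zero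
        (monic_prod_of_monic _ _ fun i _ => monic_X_sub_C _).ne_zero,
      Polynomial.natDegree_prod_of_monic _ _ (fun i _ => monic_X_sub_C _),
      Polynomial.natDegree_prod_of_monic _ _ (fun i _ => monic_X_sub_C _)]
    simp only [Polynomial.natDegree_X_sub_C, Finset.sum_const, smul_eq_mul, mul_one,
      Nat.card_Icc]
    omega
  have hPlt : P.degree < (s.card : ℕ) := by
    rw [cards, Polynomial.degree_eq_natDegree hPm.ne_zero, hPdeg]
    exact_mod_cast (by omega : 2 * n - 1 < 2 * n)
  have hPcoeff : P.coeff (s.card - 1) = 1 := by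
    rw [cards, show 2 * n - 1 = P.natDegree by omega, hPm.coeff_natDegree]
  have hPeval : ∀ x : ℂ, P.eval x =
      (∏ i ∈ Finset.Icc 1 (n - 2), (x - (q ^ 2)⁻¹ * D i)) *
        ∏ i ∈ Finset.Icc 1 (n + 1), (x - (q ^ 2)⁻¹ * C i) := by
    intro x
    simp [hP, Polynomial.eval_prod]
  have key := lagrange_coeff_sum hvs P hPlt
  rw [hPcoeff, hs, Finset.sum_insert h0, Finset.sum_union hd] at key
  -- the A-sum
  have eA : ∑ j ∈ sA, P.eval (v j) / ∏ i ∈ (insert 0 (sA ∪ sB)).erase j, (v j - v i) =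
      ∑ j ∈ Finset.Icc 1 (n - 1),
        ((∏ i ∈ Finset.Icc 1 (n - 2), (A j - (q ^ 2)⁻¹ * D i)) *
            ∏ i ∈ Finset.Icc 1 (n + 1), (A j - (q ^ 2)⁻¹ * C i)) /
          (A j * (∏ i ∈ (Finset.Icc 1 (n - 1)).erase j, (A j - A i)) *
            ∏ i ∈ Finset.Icc 1 n, (A j - (q ^ 4)⁻¹ * B i)) := by
    rw [hsA]
    refine Finset.sum_congr rfl fun j hj => ?_
    simp only [Finset.mem_Icc] at hj
    have hj0 : (0 : ℕ) ≠ j := by omega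
    have hjB : j ∉ sB := by
      simp only [hsB, Finset.mem_image, Finset.mem_Icc]
      rintro ⟨l, hl, rfl⟩
      omega
    have herase : (insert 0 (sA ∪ sB)).erase j = insert 0 ((sA.erase j) ∪ sB) := by
      rw [Finset.erase_insert_of_ne hj0, Finset.erase_union_distrib,
        Finset.erase_eq_of_notMem hjB]
    have h0' : (0 : ℕ) ∉ sA.erase j ∪ sB := fun h => h0 (Finset.mem_union.mp h |>.elim
      (fun h' => Finset.mem_union_left _ (Finset.mem_of_mem_erase h'))
      (fun h' => Finset.mem_union_right _ h'))
    have hd' : Disjoint (sA.erase j) sB := Finset.disjoint_of_subset_left (Finset.erase_subset _ _) hd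
    rw [herase, Finset.prod_insert h0', Finset.prod_union hd', hPeval, vA j hj.1 hj.2, v0, sub_zero]
    have e1 : ∏ i ∈ sA.erase j, (A j - v i) = ∏ i ∈ (Finset.Icc 1 (n - 1)).erase j, (A j - A i) := by
      rw [hsA]
      refine Finset.prod_congr rfl fun i hi => ?_
      have hi' := Finset.mem_of_mem_erase hi
      simp only [Finset.mem_Icc] at hi'
      rw [vA i hi'.1 hi'.2]
    have e2 : ∏ i ∈ sB, (A j - v i) = ∏ l ∈ Finset.Icc 1 n, (A j - (q ^ 4)⁻¹ * B l) := by
      rw [hsB, Finset.prod_image hinj]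
      refine Finset.prod_congr rfl fun l hl => ?_
      simp only [Finset.mem_Icc] at hl
      rw [vB l hl.1]
    rw [e1, e2, mul_assoc]
  -- the B-sum
  have eB : ∑ x ∈ sB, P.eval (v x) / ∏ i ∈ (insert 0 (sA ∪ sB)).erase x, (v x - v i) =
      ∑ l ∈ Finset.Icc 1 n,
        ((∏ i ∈ Finset.Icc 1 (n + 1), (B l - q ^ 2 * C i)) *
            ∏ i ∈ Finset.Icc 1 (n - 2), (B l - q ^ 2 * D i)) /
          (B l * (∏ i ∈ (Finset.Icc 1 n).erase l, (B l - B i)) *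
            ∏ i ∈ Finset.Icc 1 (n - 1), (B l - q ^ 4 * A i)) := by
    rw [hsB, Finset.sum_image hinj]
    refine Finset.sum_congr rfl fun l hl => ?_
    simp only [Finset.mem_Icc] at hl
    have hln0 : (0 : ℕ) ≠ l + n := by omega
    have hlnA : l + n ∉ sA := by
      simp only [hsA, Finset.mem_Icc]
      omega
    have herase : (insert 0 (sA ∪ sB)).erase (l + n) = insert 0 (sA ∪ sB.erase (l + n)) := by
      rw [Finset.erase_insert_of_ne hln0, Finset.erase_union_distrib,
        Finset.erase_eq_of_notMem hlnA]
    have hBerase : sB.erase (l + n) =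
        ((Finset.Icc 1 n).erase l).image (· + n) := by
      rw [hsB, Finset.image_erase (f := (· + n)) (add_left_injective n)]
    have h0' : (0 : ℕ) ∉ sA ∪ sB.erase (l + n) := fun h => h0 (Finset.mem_union.mp h |>.elim
      (fun h' => Finset.mem_union_left _ h')
      (fun h' => Finset.mem_union_right _ (Finset.mem_of_mem_erase h')))
    have hd' : Disjoint sA (sB.erase (l + n)) :=
      Finset.disjoint_of_subset_right (Finset.erase_subset _ _) hd
    rw [herase, Finset.prod_insert h0', Finset.prod_union hd', hPeval, vB l hl.1, v0, sub_zero]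
    have hinj' : ∀ a ∈ (Finset.Icc 1 n).erase l, ∀ b ∈ (Finset.Icc 1 n).erase l,
        a + n = b + n → a = b := by intro a _ b _ h; omega
    have e1 : ∏ i ∈ sA, ((q ^ 4)⁻¹ * B l - v i) =
        ∏ i ∈ Finset.Icc 1 (n - 1), ((q ^ 4)⁻¹ * (B l - q ^ 4 * A i)) := by
      rw [hsA]
      refine Finset.prod_congr rfl fun i hi => ?_
      simp only [Finset.mem_Icc] at hi
      rw [vA i hi.1 hi.2]
      field_simp
    have e2 : ∏ i ∈ sB.erase (l + n), ((q ^ 4)⁻¹ * B l - v i) =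
        ∏ m ∈ (Finset.Icc 1 n).erase l, ((q ^ 4)⁻¹ * (B l - B m)) := by
      rw [hBerase, Finset.prod_image hinj']
      refine Finset.prod_congr rfl fun m hm => ?_
      have hm' := Finset.mem_of_mem_erase hm
      simp only [Finset.mem_Icc] at hm'
      rw [vB m hm'.1]
      ring
    have e3 : ∏ i ∈ Finset.Icc 1 (n - 2), ((q ^ 4)⁻¹ * B l - (q ^ 2)⁻¹ * D i) =
        ∏ i ∈ Finset.Icc 1 (n - 2), ((q ^ 4)⁻¹ * (B l - q ^ 2 * D i)) := by
      refine Finset.prod_congr rfl fun i _ => ?_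
      field_simp
    have e4 : ∏ i ∈ Finset.Icc 1 (n + 1), ((q ^ 4)⁻¹ * B l - (q ^ 2)⁻¹ * C i) =
        ∏ i ∈ Finset.Icc 1 (n + 1), ((q ^ 4)⁻¹ * (B l - q ^ 2 * C i)) := by
      refine Finset.prod_congr rfl fun i _ => ?_
      field_simp
    rw [e1, e2, e3, e4]
    simp only [Finset.prod_mul_distrib, Finset.prod_const, Nat.card_Icc]
    rw [Finset.card_erase_of_mem (Finset.mem_Icc.mpr hl)]
    simp only [Nat.card_Icc]
    have hcard : n + 1 - 1 = n := by omega
    rw [hcard]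
    -- now pure algebra with powers of (q^4)⁻¹
    set k := ((q ^ 4)⁻¹ : ℂ) with hk
    set X1 := ∏ i ∈ Finset.Icc 1 (n - 2), (B l - q ^ 2 * D i) with hX1
    set X2 := ∏ i ∈ Finset.Icc 1 (n + 1), (B l - q ^ 2 * C i) with hX2
    set Y1 := ∏ i ∈ Finset.Icc 1 (n - 1), (B l - q ^ 4 * A i) with hY1
    set Y2 := ∏ i ∈ (Finset.Icc 1 n).erase l, (B l - B i) with hY2
    have hnum : k ^ (n - 2 + 1 - 1) * X1 * (k ^ (n + 1 + 1 - 1) * X2) =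
        k ^ (2 * n - 1) * (X2 * X1) := by
      rw [show (2 * n - 1) = (n - 2 + 1 - 1) + (n + 1 + 1 - 1) by omega, pow_add]
      ring
    have hden : k * B l * (k ^ (n - 1 + 1 - 1) * Y1 * (k ^ (n - 1) * Y2)) =
        k ^ (2 * n - 1) * (B l * Y2 * Y1) := by
      rw [show (2 * n - 1) = 1 + ((n - 1 + 1 - 1) + (n - 1)) by omega, pow_add, pow_add, pow_one]
      ring
    rw [hnum, hden, mul_div_mul_left _ _ (pow_ne_zero _ hk4)]
  -- the 0-term
  have e0 : P.eval (v 0) / ∏ i ∈ sA ∪ sB, (v 0 - v i) =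
      q ^ 2 * ((∏ i ∈ Finset.Icc 1 (n - 2), D i) * ∏ i ∈ Finset.Icc 1 (n + 1), C i) /
        ((∏ i ∈ Finset.Icc 1 (n - 1), A i) * ∏ i ∈ Finset.Icc 1 n, B i) := by
    rw [Finset.prod_union hd, hPeval, v0]
    have e1 : ∏ i ∈ sA, ((0 : ℂ) - v i) = ∏ i ∈ Finset.Icc 1 (n - 1), ((-1 : ℂ) * A i) := by
      rw [hsA]
      refine Finset.prod_congr rfl fun i hi => ?_
      simp only [Finset.mem_Icc] at hi
      rw [vA i hi.1 hi.2]
      ring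
    have e2 : ∏ i ∈ sB, ((0 : ℂ) - v i) = ∏ l ∈ Finset.Icc 1 n, (-(q ^ 4)⁻¹ * B l) := by
      rw [hsB, Finset.prod_image hinj]
      refine Finset.prod_congr rfl fun l hl => ?_
      simp only [Finset.mem_Icc] at hl
      rw [vB l hl.1]
      ring
    have e3 : ∏ i ∈ Finset.Icc 1 (n - 2), ((0 : ℂ) - (q ^ 2)⁻¹ * D i) =
        ∏ i ∈ Finset.Icc 1 (n - 2), (-(q ^ 2)⁻¹ * D i) := by
      refine Finset.prod_congr rfl fun i _ => ?_
      ring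
    have e4 : ∏ i ∈ Finset.Icc 1 (n + 1), ((0 : ℂ) - (q ^ 2)⁻¹ * C i) =
        ∏ i ∈ Finset.Icc 1 (n + 1), (-(q ^ 2)⁻¹ * C i) := by
      refine Finset.prod_congr rfl fun i _ => ?_
      ring
    rw [e1, e2, e3, e4]
    simp only [Finset.prod_mul_distrib, Finset.prod_const, Nat.card_Icc]
    set N1 := ∏ i ∈ Finset.Icc 1 (n - 2), D i with hN1
    set N2 := ∏ i ∈ Finset.Icc 1 (n + 1), C i with hN2
    set M1 := ∏ i ∈ Finset.Icc 1 (n - 1), A i with hM1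
    set M2 := ∏ i ∈ Finset.Icc 1 n, B i with hM2
    set c := ((-1 : ℂ)) ^ (n - 1 + 1 - 1) * (-(q ^ 4)⁻¹) ^ (n + 1 - 1) with hc
    have hcne : c ≠ 0 := by
      apply mul_ne_zero
      · exact pow_ne_zero _ (by norm_num)
      · exact pow_ne_zero _ (neg_ne_zero.mpr hk4)
    have hcc : (-(q ^ 2)⁻¹ : ℂ) ^ (n - 2 + 1 - 1) * (-(q ^ 2)⁻¹) ^ (n + 1 + 1 - 1) = c * q ^ 2 := by
      rw [← pow_add]
      have h1 : (-(q ^ 2)⁻¹ : ℂ) ^ (n - 2 + 1 - 1 + (n + 1 + 1 - 1)) =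
          (-1) ^ (2 * n - 1) * ((q ^ (4 * n - 2))⁻¹) := by
        rw [show n - 2 + 1 - 1 + (n + 1 + 1 - 1) = 2 * n - 1 by omega, neg_pow, inv_pow,
          ← pow_mul, show 2 * (2 * n - 1) = 4 * n - 2 by omega]
      have ha : (-(q ^ 4)⁻¹ : ℂ) ^ (n + 1 - 1) = (-1) ^ (n + 1 - 1) * (q ^ (4 * n))⁻¹ := by
        rw [neg_pow, inv_pow, ← pow_mul, show 4 * (n + 1 - 1) = 4 * n by omega]
      have h2 : c = (-1 : ℂ) ^ (2 * n - 1) * (q ^ (4 * n))⁻¹ := by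
        rw [hc, ha, show 2 * n - 1 = n - 1 + 1 - 1 + (n + 1 - 1) by omega, pow_add]
        ring
      rw [h1, h2]
      have h3 : (q ^ (4 * n - 2) : ℂ)⁻¹ = (q ^ (4 * n))⁻¹ * q ^ 2 := by
        have h4 : (q ^ (4 * n) : ℂ) = q ^ (4 * n - 2) * q ^ 2 := by
          rw [← pow_add]
          congr 1
          omega
        rw [h4, mul_inv, mul_assoc, inv_mul_cancel₀ hq2, mul_one]
      rw [h3]
      ring
    calc (-(q ^ 2)⁻¹ : ℂ) ^ (n - 2 + 1 - 1) * N1 * ((-(q ^ 2)⁻¹) ^ (n + 1 + 1 - 1) * N2) /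
          ((-1 : ℂ) ^ (n - 1 + 1 - 1) * M1 * ((-(q ^ 4)⁻¹) ^ (n + 1 - 1) * M2))
        = (c * q ^ 2) * (N1 * N2) / (c * (M1 * M2)) := by
          rw [← hcc, hc]
          ring
      _ = (c * (q ^ 2 * (N1 * N2))) / (c * (M1 * M2)) := by ring_nf
      _ = q ^ 2 * (N1 * N2) / (M1 * M2) := mul_div_mul_left _ _ hcne
  rw [Finset.erase_insert h0] at key
  rw [eA, eB, e0] at key
  linear_combination key
end

section
/- Let q be a nonzero complex number, let n ≥ 2 be an integer, fix j ∈ {1, …, n−1}, and let A₁, …, A_{n−1}, B₁, …, B_n, C₁, …, C_{n+1} be complex numbers such that all B_l are nonzero and the 2n+1 numbers q²A_j, B₁, …, B_n, q⁻²B₁, …, q⁻²B_n are pairwise distinct. Then the sum F_{n,j} = ∑_{l=1}^{n} ( ∏_{i=1}^{n+1} (B_l − C_i) · ∏_{i≠j, i=1}^{n−1} (B_l − A_i) ) / ( (A_j − q⁻²B_l) · B_l · ∏_{i≠l, i=1}^{n} (B_l − B_i)(B_l − q⁻²B_i) ) equals (q² − 1) · ( ∏_{i=1}^{n+1} (q²A_j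 − C_i) · ∏_{i≠j, i=1}^{n−1} (q²A_j − A_i) ) / ( ∏_{i=1}^{n} (q²A_j − B_i)(q²A_j − q⁻²B_i) ) − ∑_{l=1}^{n} ( ∏_{i=1}^{n+1} (B_l − q²C_i) · ∏_{i≠j, i=1}^{n−1} (B_l − q²A_i) ) / ( B_l · (q⁻²B_l − q²A_j) · ∏_{i≠l, i=1}^{n} (B_l − B_i)(B_l − q²B_i) ). (Identity (A17), obtained from the vanishing of the sum of all residues of the rational function f₁(z) = ∏_{i=1}^{n+1}(z − C_i)·∏_{i≠j}(z − A_i) / ( (z − q²A_j)·∏_{i=1}^{n}(z − B_i)(z − q⁻²B_i) ).) -/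
open Finset Polynomial

lemma aux_leadingCoeff_basis {F : Type*} [Field F] {ι : Type*} [DecidableEq ι]
    (s : Finset ι) (v : ι → F) (hvs : Set.InjOn v s) {i : ι} (hi : i ∈ s) :
    (Lagrange.basis s v i).leadingCoeff = ∏ j ∈ s.erase i, (v i - v j)⁻¹ := by
  rw [Lagrange.basis, leadingCoeff_prod]
  refine Finset.prod_congr rfl fun j hj => ?_
  have hne : v i ≠ v j := by
    intro h
    exact (Finset.mem_erase.mp hj).1 (hvs hi (Finset.mem_of_mem_erase hj) h).symm |>.elim
  rw [Lagrange.basisDivisor, leadingCoeff_mul, leadingCoeff_C, leadingCoeff_X_sub_C, mul_one]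

lemma aux_sum_zero {F : Type*} [Field F] {ι : Type*} [DecidableEq ι]
    (s : Finset ι) (v : ι → F) (hvs : Set.InjOn v s) (P : F[X])
    (hP : P.degree < ((s.card - 1 : ℕ) : WithBot ℕ)) :
    ∑ i ∈ s, P.eval (v i) / ∏ j ∈ s.erase i, (v i - v j) = 0 := by
  have hP' : P.degree < (s.card : WithBot ℕ) := by
    refine hP.trans_le ?_
    exact Nat.cast_le.mpr (Nat.sub_le _ _)
  have h0 : P.coeff (s.card - 1) = 0 := Polynomial.coeff_eq_zero_of_degree_lt hP
  have hint := Lagrange.eq_interpolate hvs hP'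
  rw [hint, Lagrange.interpolate_apply, Polynomial.finset_sum_coeff] at h0
  rw [← h0]
  refine Finset.sum_congr rfl fun i hi => ?_
  rw [Polynomial.coeff_C_mul]
  have hc : (Lagrange.basis s v i).coeff (s.card - 1) = (Lagrange.basis s v i).leadingCoeff := by
    rw [Polynomial.leadingCoeff, Lagrange.natDegree_basis hvs hi]
  rw [hc, aux_leadingCoeff_basis s v hvs hi, div_eq_mul_inv, ← Finset.prod_inv_distrib]

open Finset

lemma shift_map (n : ℕ) : Finset.map ⟨fun i => i + n, fun a b h => by simpa using h⟩ (Finset.Icc 1 n)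
    = Finset.Icc (n+1) (2*n) := by
  ext x
  simp only [Finset.mem_map, Finset.mem_Icc, Function.Embedding.coeFn_mk]
  constructor
  · rintro ⟨b, hb, rfl⟩; show n + 1 ≤ b + n ∧ b + n ≤ 2 * n; omega
  · intro h; exact ⟨x - n, by omega, show x - n + n = x by omega⟩

lemma shift_map_erase (n l : ℕ) :
    Finset.map ⟨fun i => i + n, fun a b h => by simpa using h⟩ ((Finset.Icc 1 n).erase l)
    = (Finset.Icc (n+1) (2*n)).erase (l + n) := by
  ext x
  simp only [Finset.mem_map, Finset.mem_Icc, Finset.mem_erase, Function.Embedding.coeFn_mk]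
  constructor
  · rintro ⟨b, ⟨hb1, hb2, hb3⟩, rfl⟩; show b + n ≠ l + n ∧ n + 1 ≤ b + n ∧ b + n ≤ 2 * n; omega
  · rintro ⟨h1, h2, h3⟩; exact ⟨x - n, ⟨by omega, by omega, by omega⟩, show x - n + n = x by omega⟩

lemma sum_shift (n : ℕ) (g : ℕ → ℂ) :
    ∑ i ∈ Finset.Icc (n+1) (2*n), g i = ∑ i ∈ Finset.Icc 1 n, g (i + n) := by
  rw [← shift_map n, Finset.sum_map]; rfl

lemma prod_shift (n : ℕ) (g : ℕ → ℂ) :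
    ∏ i ∈ Finset.Icc (n+1) (2*n), g i = ∏ i ∈ Finset.Icc 1 n, g (i + n) := by
  rw [← shift_map n, Finset.prod_map]; rfl

lemma prod_shift_erase (n l : ℕ) (g : ℕ → ℂ) :
    ∏ i ∈ (Finset.Icc (n+1) (2*n)).erase (l + n), g i
      = ∏ i ∈ (Finset.Icc 1 n).erase l, g (i + n) := by
  rw [← shift_map_erase, Finset.prod_map]; rfl

open Finset Polynomial

lemma div_const_mul (a c d : ℂ) : a / (c * d) = c⁻¹ * (a / d) := by
  rw [mul_comm c d, ← div_div, div_eq_mul_inv (a / d) c, mul_comm]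

/-- Identity (A17). -/
theorem identity_A17 (q : ℂ) (hq : q ≠ 0) (n : ℕ) (hn : 2 ≤ n)
    (j : ℕ) (hj : j ∈ Finset.Icc 1 (n - 1))
    (A B C : ℕ → ℂ)
    (hB0 : ∀ l ∈ Finset.Icc 1 n, B l ≠ 0)
    (hAjB : ∀ i ∈ Finset.Icc 1 n, q ^ 2 * A j ≠ B i)
    (hAjBq : ∀ i ∈ Finset.Icc 1 n, q ^ 2 * A j ≠ (q ^ 2)⁻¹ * B i)
    (hBB : ∀ i ∈ Finset.Icc 1 n, ∀ t ∈ Finset.Icc 1 n, i ≠ t → B i ≠ B t)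
    (hBBq : ∀ i ∈ Finset.Icc 1 n, ∀ t ∈ Finset.Icc 1 n, B i ≠ (q ^ 2)⁻¹ * B t) :
    ∑ l ∈ Finset.Icc 1 n,
      ((∏ i ∈ Finset.Icc 1 (n + 1), (B l - C i)) *
          ∏ i ∈ (Finset.Icc 1 (n - 1)).erase j, (B l - A i)) /
        ((A j - (q ^ 2)⁻¹ * B l) * B l *
          ∏ i ∈ (Finset.Icc 1 n).erase l, (B l - B i) * (B l - (q ^ 2)⁻¹ * B i))
    = (q ^ 2 - 1) *
        ((∏ i ∈ Finset.Icc 1 (n + 1), (q ^ 2 * A j - C i)) *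
          ∏ i ∈ (Finset.Icc 1 (n - 1)).erase j, (q ^ 2 * A j - A i)) /
        (∏ i ∈ Finset.Icc 1 n, (q ^ 2 * A j - B i) * (q ^ 2 * A j - (q ^ 2)⁻¹ * B i))
      - ∑ l ∈ Finset.Icc 1 n,
        ((∏ i ∈ Finset.Icc 1 (n + 1), (B l - q ^ 2 * C i)) *
            ∏ i ∈ (Finset.Icc 1 (n - 1)).erase j, (B l - q ^ 2 * A i)) /
          (B l * ((q ^ 2)⁻¹ * B l - q ^ 2 * A j) *
            ∏ i ∈ (Finset.Icc 1 n).erase l, (B l - B i) * (B l - q ^ 2 * B i)) := by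
  obtain ⟨m, rfl⟩ : ∃ m, n = m + 2 := ⟨n - 2, by omega⟩
  clear hn
  set n := m + 2 with hn
  simp only [show n - 1 = m + 1 from by omega] at hj ⊢
  obtain ⟨hj1, hj2⟩ := Finset.mem_Icc.mp hj
  have hq2 : (q : ℂ)^2 ≠ 0 := pow_ne_zero _ hq
  have hqq : (q : ℂ)^2 * (q^2)⁻¹ = 1 := mul_inv_cancel₀ hq2
  have h1n : (1 : ℕ) ∈ Finset.Icc 1 n := by rw [Finset.mem_Icc]; omega
  have hq21 : (q : ℂ)^2 - 1 ≠ 0 := by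
    intro h
    have h2 : (q : ℂ)^2 = 1 := by linear_combination h
    have hb := hBBq 1 h1n 1 h1n
    rw [h2, inv_one, one_mul] at hb
    exact hb rfl
  set v : ℕ → ℂ := fun k => if k = 0 then q^2 * A j else if k ≤ n then B k
    else (q^2)⁻¹ * B (k - n) with hv
  have hv0 : v 0 = q^2 * A j := by simp [hv]
  have hvmid : ∀ k, 1 ≤ k → k ≤ n → v k = B k := by
    intro k h1 h2; simp only [hv]; rw [if_neg (by omega), if_pos h2]
  have hvhigh : ∀ k, n + 1 ≤ k → v k = (q^2)⁻¹ * B (k - n) := by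
    intro k h1; simp only [hv]; rw [if_neg (by omega), if_neg (by omega)]
  have hinj : Set.InjOn v ↑(Finset.Icc 0 (2*n)) := by
    intro a ha b hb hab
    simp only [Finset.coe_Icc, Set.mem_Icc] at ha hb
    by_contra hne
    have hmem : ∀ i : ℕ, 1 ≤ i → i ≤ n → i ∈ Finset.Icc 1 n :=
      fun i h1 h2 => Finset.mem_Icc.mpr ⟨h1, h2⟩
    rcases Nat.eq_zero_or_pos a with ha0 | ha1 <;> rcases Nat.eq_zero_or_pos b with hb0 | hb1
    · exact hne (by omega)
    · subst ha0
      rw [hv0] at hab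
      by_cases hbn : b ≤ n
      · rw [hvmid b hb1 hbn] at hab; exact hAjB b (hmem b hb1 hbn) hab
      · rw [hvhigh b (by omega)] at hab
        exact hAjBq (b - n) (hmem _ (by omega) (by omega)) hab
    · subst hb0
      rw [hv0] at hab
      by_cases han : a ≤ n
      · rw [hvmid a ha1 han] at hab; exact hAjB a (hmem a ha1 han) hab.symm
      · rw [hvhigh a (by omega)] at hab
        exact hAjBq (a - n) (hmem _ (by omega) (by omega)) hab.symm
    · by_cases han : a ≤ n <;> by_cases hbn : b ≤ n
      · rw [hvmid a ha1 han, hvmid b hb1 hbn] at hab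
        exact hBB a (hmem a ha1 han) b (hmem b hb1 hbn) hne hab
      · rw [hvmid a ha1 han, hvhigh b (by omega)] at hab
        exact hBBq a (hmem a ha1 han) (b - n) (hmem _ (by omega) (by omega)) hab
      · rw [hvhigh a (by omega), hvmid b hb1 hbn] at hab
        exact hBBq b (hmem b hb1 hbn) (a - n) (hmem _ (by omega) (by omega)) hab.symm
      · rw [hvhigh a (by omega), hvhigh b (by omega)] at hab
        have h2 := mul_left_cancel₀ (inv_ne_zero hq2) hab
        exact hBB (a - n) (hmem _ (by omega) (by omega)) (b - n)
          (hmem _ (by omega) (by omega)) (by omega) h2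
  have hcards : (Finset.Icc 0 (2*n)).card = 2*n + 1 := by rw [Nat.card_Icc]; omega
  have hcard1 : (Finset.Icc 1 (n+1)).card = n + 1 := by rw [Nat.card_Icc]; omega
  have hcard2 : ((Finset.Icc 1 (m+1)).erase j).card = m := by
    rw [Finset.card_erase_of_mem hj, Nat.card_Icc]; omega
  have hdeg : ((Lagrange.nodal (Finset.Icc 1 (n+1)) C) *
      (Lagrange.nodal ((Finset.Icc 1 (m+1)).erase j) A)).degree
      < (((Finset.Icc 0 (2*n)).card - 1 : ℕ) : WithBot ℕ) := by
    rw [Polynomial.degree_mul, Lagrange.degree_nodal, Lagrange.degree_nodal,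
      hcard1, hcard2, hcards, ← Nat.cast_add]
    exact_mod_cast by omega
  have key := aux_sum_zero (Finset.Icc 0 (2*n)) v hinj _ hdeg
  simp only [Polynomial.eval_mul, Lagrange.eval_nodal] at key
  -- split the sum
  have hsplit0 : Finset.Icc 0 (2*n) = insert 0 (Finset.Icc 1 (2*n)) := by
    ext x; simp only [Finset.mem_Icc, Finset.mem_insert]; omega
  have h0notin : (0 : ℕ) ∉ Finset.Icc 1 (2*n) := by simp
  have hsplit1 : Finset.Icc 1 (2*n) = Finset.Icc 1 n ∪ Finset.Icc (n+1) (2*n) := by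
    ext x; simp only [Finset.mem_Icc, Finset.mem_union]; omega
  have hdisj : Disjoint (Finset.Icc 1 n) (Finset.Icc (n+1) (2*n)) := by
    rw [Finset.disjoint_left]; intro x hx hx'
    rw [Finset.mem_Icc] at hx hx'; omega
  have hsum : ∀ f : ℕ → ℂ, ∑ k ∈ Finset.Icc 0 (2*n), f k
      = f 0 + ((∑ l ∈ Finset.Icc 1 n, f l) + ∑ l ∈ Finset.Icc 1 n, f (l + n)) := by
    intro f
    rw [hsplit0, Finset.sum_insert h0notin, hsplit1, Finset.sum_union hdisj, sum_shift]
  rw [hsum] at key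
  -- residue at q^2 * A j
  have h0erase : (Finset.Icc 0 (2*n)).erase 0 = Finset.Icc 1 (2*n) := by
    ext x; simp only [Finset.mem_erase, Finset.mem_Icc]; omega
  have hT0 : (∏ i ∈ Finset.Icc 1 (n+1), (v 0 - C i)) *
      (∏ i ∈ (Finset.Icc 1 (m+1)).erase j, (v 0 - A i))
      / ∏ i ∈ (Finset.Icc 0 (2*n)).erase 0, (v 0 - v i)
      = ((∏ i ∈ Finset.Icc 1 (n+1), (q^2*A j - C i)) *
          ∏ i ∈ (Finset.Icc 1 (m+1)).erase j, (q^2*A j - A i))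
        / ∏ i ∈ Finset.Icc 1 n, (q^2*A j - B i) * (q^2*A j - (q^2)⁻¹ * B i) := by
    rw [h0erase, hsplit1, Finset.prod_union hdisj, prod_shift, hv0, Finset.prod_mul_distrib]
    congr 2
    · exact Finset.prod_congr rfl fun i hi => by
        obtain ⟨h1, h2⟩ := Finset.mem_Icc.mp hi; rw [hvmid i h1 h2]
    · refine Finset.prod_congr rfl fun i hi => ?_
      obtain ⟨h1, h2⟩ := Finset.mem_Icc.mp hi
      rw [hvhigh (i+n) (by omega), show i + n - n = i from by omega]
  -- residues at B l
  have hmidterm : ∀ l ∈ Finset.Icc 1 n,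
      (∏ i ∈ Finset.Icc 1 (n+1), (v l - C i)) *
        (∏ i ∈ (Finset.Icc 1 (m+1)).erase j, (v l - A i))
        / ∏ i ∈ (Finset.Icc 0 (2*n)).erase l, (v l - v i)
      = -(q^2-1)⁻¹ * (((∏ i ∈ Finset.Icc 1 (n+1), (B l - C i)) *
          ∏ i ∈ (Finset.Icc 1 (m+1)).erase j, (B l - A i)) /
        ((A j - (q^2)⁻¹ * B l) * B l *
          ∏ i ∈ (Finset.Icc 1 n).erase l, (B l - B i) * (B l - (q^2)⁻¹ * B i))) := by
    intro l hl
    obtain ⟨hl1, hl2⟩ := Finset.mem_Icc.mp hl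
    have herase : (Finset.Icc 0 (2*n)).erase l
        = insert 0 (((Finset.Icc 1 n).erase l) ∪ Finset.Icc (n+1) (2*n)) := by
      ext x
      simp only [Finset.mem_erase, Finset.mem_Icc, Finset.mem_insert, Finset.mem_union]
      omega
    have h0notin' : (0:ℕ) ∉ ((Finset.Icc 1 n).erase l) ∪ Finset.Icc (n+1) (2*n) := by
      simp only [Finset.mem_union, Finset.mem_erase, Finset.mem_Icc]; omega
    have hdisj' : Disjoint ((Finset.Icc 1 n).erase l) (Finset.Icc (n+1) (2*n)) :=
      hdisj.mono_left (Finset.erase_subset _ _)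
    have hp1 : ∏ i ∈ (Finset.Icc 1 n).erase l, (B l - v i)
        = ∏ i ∈ (Finset.Icc 1 n).erase l, (B l - B i) := by
      refine Finset.prod_congr rfl fun i hi => ?_
      obtain ⟨hi1, hi2⟩ := Finset.mem_Icc.mp (Finset.mem_of_mem_erase hi)
      rw [hvmid i hi1 hi2]
    have hp2 : ∏ i ∈ Finset.Icc 1 n, (B l - v (i + n))
        = (B l - (q^2)⁻¹ * B l) * ∏ i ∈ (Finset.Icc 1 n).erase l, (B l - (q^2)⁻¹ * B i) := by
      rw [← Finset.mul_prod_erase _ _ hl]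
      congr 1
      · rw [hvhigh (l+n) (by omega), show l + n - n = l from by omega]
      · refine Finset.prod_congr rfl fun i hi => ?_
        obtain ⟨hi1, hi2⟩ := Finset.mem_Icc.mp (Finset.mem_of_mem_erase hi)
        rw [hvhigh (i+n) (by omega), show i + n - n = i from by omega]
    rw [hvmid l hl1 hl2, herase, Finset.prod_insert h0notin', Finset.prod_union hdisj',
      prod_shift, hv0, hp1, hp2, Finset.prod_mul_distrib]
    have hden : (B l - q^2*A j) * ((∏ i ∈ (Finset.Icc 1 n).erase l, (B l - B i)) *
        ((B l - (q^2)⁻¹*B l) * ∏ i ∈ (Finset.Icc 1 n).erase l, (B l - (q^2)⁻¹*B i)))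
        = (-(q^2-1)) * ((A j - (q^2)⁻¹ * B l) * B l *
          ((∏ i ∈ (Finset.Icc 1 n).erase l, (B l - B i)) *
            ∏ i ∈ (Finset.Icc 1 n).erase l, (B l - (q^2)⁻¹*B i))) := by
      field_simp
      ring
    rw [hden, div_const_mul, ← neg_inv]
  -- residues at q^{-2} B l
  have hcard3 : ∀ l ∈ Finset.Icc 1 n, ((Finset.Icc 1 n).erase l).card = m + 1 := by
    intro l hl; rw [Finset.card_erase_of_mem hl, Nat.card_Icc]; omega
  have hhighterm : ∀ l ∈ Finset.Icc 1 n,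
      (∏ i ∈ Finset.Icc 1 (n+1), (v (l+n) - C i)) *
        (∏ i ∈ (Finset.Icc 1 (m+1)).erase j, (v (l+n) - A i))
        / ∏ i ∈ (Finset.Icc 0 (2*n)).erase (l+n), (v (l+n) - v i)
      = -(q^2-1)⁻¹ * (((∏ i ∈ Finset.Icc 1 (n+1), (B l - q^2 * C i)) *
            ∏ i ∈ (Finset.Icc 1 (m+1)).erase j, (B l - q^2 * A i)) /
          (B l * ((q^2)⁻¹ * B l - q^2 * A j) *
            ∏ i ∈ (Finset.Icc 1 n).erase l, (B l - B i) * (B l - q^2 * B i))) := by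
    intro l hl
    obtain ⟨hl1, hl2⟩ := Finset.mem_Icc.mp hl
    have hvl : v (l + n) = (q^2)⁻¹ * B l := by
      rw [hvhigh (l+n) (by omega), show l + n - n = l from by omega]
    -- numerator factorizations
    have hnum1 : ∏ i ∈ Finset.Icc 1 (n+1), ((q^2)⁻¹ * B l - C i)
        = ((q^2)⁻¹)^(n+1) * ∏ i ∈ Finset.Icc 1 (n+1), (B l - q^2 * C i) := by
      rw [show ((q:ℂ)^2)⁻¹^(n+1) = ∏ _i ∈ Finset.Icc 1 (n+1), ((q:ℂ)^2)⁻¹ from by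
          rw [Finset.prod_const, hcard1],
        ← Finset.prod_mul_distrib]
      refine Finset.prod_congr rfl fun i _ => ?_
      field_simp
    have hnum2 : ∏ i ∈ (Finset.Icc 1 (m+1)).erase j, ((q^2)⁻¹ * B l - A i)
        = ((q^2)⁻¹)^m * ∏ i ∈ (Finset.Icc 1 (m+1)).erase j, (B l - q^2 * A i) := by
      rw [show ((q:ℂ)^2)⁻¹^m = ∏ _i ∈ (Finset.Icc 1 (m+1)).erase j, ((q:ℂ)^2)⁻¹ from by
          rw [Finset.prod_const, hcard2],
        ← Finset.prod_mul_distrib]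
      refine Finset.prod_congr rfl fun i _ => ?_
      field_simp
    -- denominator decomposition
    have herase2 : (Finset.Icc 0 (2*n)).erase (l+n)
        = insert 0 (Finset.Icc 1 n ∪ (Finset.Icc (n+1) (2*n)).erase (l+n)) := by
      ext x
      simp only [Finset.mem_erase, Finset.mem_Icc, Finset.mem_insert, Finset.mem_union]
      omega
    have h0notin'' : (0:ℕ) ∉ Finset.Icc 1 n ∪ (Finset.Icc (n+1) (2*n)).erase (l+n) := by
      simp only [Finset.mem_union, Finset.mem_erase, Finset.mem_Icc]; omega
    have hdisj'' : Disjoint (Finset.Icc 1 n) ((Finset.Icc (n+1) (2*n)).erase (l+n)) :=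
      hdisj.mono_right (Finset.erase_subset _ _)
    have hp3 : ∏ i ∈ Finset.Icc 1 n, ((q^2)⁻¹ * B l - v i)
        = ((q^2)⁻¹ * B l - B l) *
          (((q^2)⁻¹)^(m+1) * ∏ i ∈ (Finset.Icc 1 n).erase l, (B l - q^2 * B i)) := by
      rw [← Finset.mul_prod_erase _ _ hl]
      congr 1
      · rw [hvmid l hl1 hl2]
      · rw [show ((q:ℂ)^2)⁻¹^(m+1) = ∏ _i ∈ (Finset.Icc 1 n).erase l, ((q:ℂ)^2)⁻¹ from by
            rw [Finset.prod_const, hcard3 l hl],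
          ← Finset.prod_mul_distrib]
        refine Finset.prod_congr rfl fun i hi => ?_
        obtain ⟨hi1, hi2⟩ := Finset.mem_Icc.mp (Finset.mem_of_mem_erase hi)
        rw [hvmid i hi1 hi2]
        field_simp
    have hp4 : ∏ i ∈ (Finset.Icc (n+1) (2*n)).erase (l+n), ((q^2)⁻¹ * B l - v i)
        = ((q^2)⁻¹)^(m+1) * ∏ i ∈ (Finset.Icc 1 n).erase l, (B l - B i) := by
      rw [prod_shift_erase,
        show ((q:ℂ)^2)⁻¹^(m+1) = ∏ _i ∈ (Finset.Icc 1 n).erase l, ((q:ℂ)^2)⁻¹ from by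
          rw [Finset.prod_const, hcard3 l hl],
        ← Finset.prod_mul_distrib]
      refine Finset.prod_congr rfl fun i hi => ?_
      obtain ⟨hi1, hi2⟩ := Finset.mem_Icc.mp (Finset.mem_of_mem_erase hi)
      rw [hvhigh (i+n) (by omega), show i + n - n = i from by omega]
      ring
    rw [hvl, herase2, Finset.prod_insert h0notin'', Finset.prod_union hdisj'', hp3, hp4,
      hnum1, hnum2, hv0, Finset.prod_mul_distrib]
    -- nonzeroness
    have hBlne : B l ≠ 0 := hB0 l hl
    have hD1ne : (q^2)⁻¹ * B l - q^2 * A j ≠ 0 :=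
      sub_ne_zero_of_ne fun h => hAjBq l hl h.symm
    have huBl : (q^2)⁻¹ * B l - B l ≠ 0 := by
      intro h
      exact hBBq l hl l hl (sub_eq_zero.mp h).symm
    have hYne : ∏ i ∈ (Finset.Icc 1 n).erase l, (B l - B i) ≠ 0 := by
      rw [Finset.prod_ne_zero_iff]
      intro i hi
      obtain ⟨hne, hi2⟩ := Finset.mem_erase.mp hi
      exact sub_ne_zero_of_ne (hBB l hl i hi2 (fun h => hne (h.symm)) )
    have hXne : ∏ i ∈ (Finset.Icc 1 n).erase l, (B l - q^2 * B i) ≠ 0 := by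
      rw [Finset.prod_ne_zero_iff]
      intro i hi
      obtain ⟨hne, hi2⟩ := Finset.mem_erase.mp hi
      refine sub_ne_zero_of_ne fun h => hBBq i hi2 l hl ?_
      rw [h, ← mul_assoc, inv_mul_cancel₀ hq2, one_mul]
    have hpne : (((q:ℂ)^2)⁻¹)^(m+1) ≠ 0 := pow_ne_zero _ (inv_ne_zero hq2)
    rw [← mul_div_assoc, div_eq_div_iff
      (mul_ne_zero hD1ne (mul_ne_zero (mul_ne_zero huBl (mul_ne_zero hpne hXne))
        (mul_ne_zero hpne hYne)))
      (mul_ne_zero (mul_ne_zero hBlne hD1ne) (mul_ne_zero hYne hXne))]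
    have hee : ((q:ℂ)^2 - 1) * (q^2-1)⁻¹ = 1 := mul_inv_cancel₀ hq21
    simp only [hn]
    linear_combination
      ((((q:ℂ)^2)⁻¹^(2*m+2) * (∏ i ∈ Finset.Icc 1 (m+2+1), (B l - q^2 * C i)) *
        (∏ i ∈ (Finset.Icc 1 (m+1)).erase j, (B l - q^2 * A i)) *
        ((q^2)⁻¹ * B l - q^2 * A j) *
        (∏ i ∈ (Finset.Icc 1 (m+2)).erase l, (B l - q^2 * B i)) *
        (∏ i ∈ (Finset.Icc 1 (m+2)).erase l, (B l - B i)) * B l) * (q^2-1)⁻¹) * hqq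
      - ((((q:ℂ)^2)⁻¹^(2*m+2) * (∏ i ∈ Finset.Icc 1 (m+2+1), (B l - q^2 * C i)) *
        (∏ i ∈ (Finset.Icc 1 (m+1)).erase j, (B l - q^2 * A i)) *
        ((q^2)⁻¹ * B l - q^2 * A j) *
        (∏ i ∈ (Finset.Icc 1 (m+2)).erase l, (B l - q^2 * B i)) *
        (∏ i ∈ (Finset.Icc 1 (m+2)).erase l, (B l - B i)) * B l) * (q^2)⁻¹) * hee
  -- assemble
  have hSmid : ∑ l ∈ Finset.Icc 1 n,
      (∏ i ∈ Finset.Icc 1 (n+1), (v l - C i)) *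
        (∏ i ∈ (Finset.Icc 1 (m+1)).erase j, (v l - A i))
        / ∏ i ∈ (Finset.Icc 0 (2*n)).erase l, (v l - v i)
      = -(q^2-1)⁻¹ * ∑ l ∈ Finset.Icc 1 n,
        ((∏ i ∈ Finset.Icc 1 (n+1), (B l - C i)) *
          ∏ i ∈ (Finset.Icc 1 (m+1)).erase j, (B l - A i)) /
        ((A j - (q^2)⁻¹ * B l) * B l *
          ∏ i ∈ (Finset.Icc 1 n).erase l, (B l - B i) * (B l - (q^2)⁻¹ * B i)) := by
    rw [Finset.mul_sum]
    exact Finset.sum_congr rfl hmidterm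
  have hShigh : ∑ l ∈ Finset.Icc 1 n,
      (∏ i ∈ Finset.Icc 1 (n+1), (v (l+n) - C i)) *
        (∏ i ∈ (Finset.Icc 1 (m+1)).erase j, (v (l+n) - A i))
        / ∏ i ∈ (Finset.Icc 0 (2*n)).erase (l+n), (v (l+n) - v i)
      = -(q^2-1)⁻¹ * ∑ l ∈ Finset.Icc 1 n,
        ((∏ i ∈ Finset.Icc 1 (n+1), (B l - q^2 * C i)) *
            ∏ i ∈ (Finset.Icc 1 (m+1)).erase j, (B l - q^2 * A i)) /
          (B l * ((q^2)⁻¹ * B l - q^2 * A j) *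
            ∏ i ∈ (Finset.Icc 1 n).erase l, (B l - B i) * (B l - q^2 * B i)) := by
    rw [Finset.mul_sum]
    exact Finset.sum_congr rfl hhighterm
  rw [hT0, hSmid, hShigh] at key
  rw [mul_div_assoc]
  have hee : ((q:ℂ)^2 - 1) * (q^2-1)⁻¹ = 1 := mul_inv_cancel₀ hq21
  linear_combination (-((q:ℂ)^2-1)) * key
    + (-((∑ l ∈ Finset.Icc 1 n,
        ((∏ i ∈ Finset.Icc 1 (n+1), (B l - C i)) *
          ∏ i ∈ (Finset.Icc 1 (m+1)).erase j, (B l - A i)) /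
        ((A j - (q^2)⁻¹ * B l) * B l *
          ∏ i ∈ (Finset.Icc 1 n).erase l, (B l - B i) * (B l - (q^2)⁻¹ * B i)))
      + ∑ l ∈ Finset.Icc 1 n,
        ((∏ i ∈ Finset.Icc 1 (n+1), (B l - q^2 * C i)) *
            ∏ i ∈ (Finset.Icc 1 (m+1)).erase j, (B l - q^2 * A i)) /
          (B l * ((q^2)⁻¹ * B l - q^2 * A j) *
            ∏ i ∈ (Finset.Icc 1 n).erase l, (B l - B i) * (B l - q^2 * B i)))) * hee
end

section
/- Let q be a nonzero complex number, let n ≥ 2 be an integer, fix l ∈ {1, …, n}, and let A₁, …, A_{n−1}, B₁, …, B_n, D₁, …, D_{n−2} be complex numbers such that all A_j are nonzero and the 2n−1 numbers q⁻²B_l, A₁, …, A_{n−1}, q²A₁, …, q²A_{n−1} are pairwise distinct. Then the sum G_{n,l} = ∑_{j=1}^{n−1} ( ∏_{i≠l, i=1}^{n} (A_j − B_i) · ∏_{i=1}^{n−2} (A_j − D_i) ) / ( A_j · (B_l − q²A_j) · ∏_{i≠j, i=1}^{n−1} (A_j − A_i)(A_j − q²A_i) ) equals (q⁻² − 1) ·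 ( ∏_{i≠l, i=1}^{n} (B_l − q²B_i) · ∏_{i=1}^{n−2} (q⁻²B_l − D_i) ) / ( ∏_{i=1}^{n−1} (B_l − q²A_i)(q⁻²B_l − q²A_i) ) − ∑_{j=1}^{n−1} ( ∏_{i≠l, i=1}^{n} (A_j − q⁻²B_i) · ∏_{i=1}^{n−2} (A_j − q⁻²D_i) ) / ( A_j · (q²A_j − q⁻²B_l) · ∏_{i≠j, i=1}^{n−1} (A_j − A_i)(A_j − q⁻²A_i) ). (Identity (A18), obtained from the vanishing of the sum of all residues of the rational function f₂(z) = ∏_{i≠l}(z − B_i)·∏_{i=1}^{n−2}(z − D_i) / ( (z − q⁻²B_l)·∏_{i=1}^{n−1}(z − A_i)(z − q²A_i) ).) -/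
open Polynomial Finset

lemma leadingCoeff_basisDivisor (a b : ℂ) :
    (Lagrange.basisDivisor a b).leadingCoeff = (a - b)⁻¹ := by
  rw [Lagrange.basisDivisor, leadingCoeff_mul, leadingCoeff_C,
    (monic_X_sub_C b).leadingCoeff, mul_one]

lemma coeff_basis' {ι : Type*} [DecidableEq ι] (s : Finset ι) (v : ι → ℂ)
    (hvs : Set.InjOn v s) {i : ι} (hi : i ∈ s) :
    (Lagrange.basis s v i).coeff (s.card - 1) = ∏ j ∈ s.erase i, (v i - v j)⁻¹ := by
  have hnd := Lagrange.natDegree_basis hvs hi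
  rw [← hnd, coeff_natDegree, Lagrange.basis, leadingCoeff_prod]
  exact Finset.prod_congr rfl fun j _ => leadingCoeff_basisDivisor _ _

lemma sum_div_prod_eq_zero {ι : Type*} [DecidableEq ι] (s : Finset ι) (v : ι → ℂ)
    (hvs : Set.InjOn v s) (P : Polynomial ℂ) (hdeg : P.degree < ((s.card : ℕ) - 1 : ℕ)) :
    ∑ i ∈ s, P.eval (v i) / ∏ j ∈ s.erase i, (v i - v j) = 0 := by
  have hdeg' : P.degree < s.card :=
    lt_of_lt_of_le hdeg (by exact_mod_cast Nat.sub_le s.card 1)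
  have hP := Lagrange.eq_interpolate hvs hdeg'
  have h0 : P.coeff (s.card - 1) = 0 := coeff_eq_zero_of_degree_lt hdeg
  rw [hP, Lagrange.interpolate_apply, finset_sum_coeff] at h0
  simp_rw [coeff_C_mul] at h0
  rw [← h0]
  refine Finset.sum_congr rfl fun i hi => ?_
  rw [coeff_basis' s v hvs hi, div_eq_mul_inv, Finset.prod_inv_distrib]

lemma div_eq_scale_div (N d₁ d₂ r : ℂ) (hr : r ≠ 0) (h : d₂ = r * d₁) :
    N / d₁ = r * (N / d₂) := by
  rcases eq_or_ne d₁ 0 with rfl | hd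
  · simp [h]
  · rw [h, ← mul_div_assoc, mul_div_mul_left _ _ hr]


lemma prod_scale {α : Type*} (t : Finset α) (c : ℂ) (f g : α → ℂ)
    (h : ∀ i ∈ t, f i = c * g i) : ∏ i ∈ t, f i = c ^ t.card * ∏ i ∈ t, g i := by
  rw [← Finset.prod_const, ← Finset.prod_mul_distrib]
  exact Finset.prod_congr rfl h

lemma scale_cancel (a e x z : ℂ) (he : e ≠ 0) : a * (e * x) / (e * z) = a * (x / z) := by
  rcases eq_or_ne z 0 with rfl | hz
  · simp
  · field_simp

lemma div_eq_scale_div' (N d₁ d₂ κ r : ℂ) (hκ : κ ≠ 0) (hr : r ≠ 0) (h : κ * d₂ = r * d₁) :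
    κ * N / d₁ = r * (N / d₂) := by
  rcases eq_or_ne d₂ 0 with rfl | h2
  · have hd1 : d₁ = 0 := by
      rw [mul_zero] at h
      rcases mul_eq_zero.1 h.symm with h' | h'
      · exact absurd h' hr
      · exact h'
    simp [hd1]
  · have h1 : d₁ ≠ 0 := by
      intro hh
      rw [hh, mul_zero] at h
      rcases mul_eq_zero.1 h with h' | h'
      · exact hκ h'
      · exact h2 h'
    field_simp
    linear_combination N * h

/-- Identity (A18). -/
theorem identity_A18 (q : ℂ) (hq : q ≠ 0) (n : ℕ) (hn : 2 ≤ n)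
    (l : ℕ) (hl : l ∈ Finset.Icc 1 n)
    (A B D : ℕ → ℂ)
    (hA0 : ∀ j ∈ Finset.Icc 1 (n - 1), A j ≠ 0)
    (hBlA : ∀ i ∈ Finset.Icc 1 (n - 1), (q ^ 2)⁻¹ * B l ≠ A i)
    (hBlAq : ∀ i ∈ Finset.Icc 1 (n - 1), (q ^ 2)⁻¹ * B l ≠ q ^ 2 * A i)
    (hAA : ∀ i ∈ Finset.Icc 1 (n - 1), ∀ t ∈ Finset.Icc 1 (n - 1), i ≠ t → A i ≠ A t)
    (hAAq : ∀ i ∈ Finset.Icc 1 (n - 1), ∀ t ∈ Finset.Icc 1 (n - 1), A i ≠ q ^ 2 * A t) :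
    ∑ j ∈ Finset.Icc 1 (n - 1),
      ((∏ i ∈ (Finset.Icc 1 n).erase l, (A j - B i)) *
          ∏ i ∈ Finset.Icc 1 (n - 2), (A j - D i)) /
        (A j * (B l - q ^ 2 * A j) *
          ∏ i ∈ (Finset.Icc 1 (n - 1)).erase j, (A j - A i) * (A j - q ^ 2 * A i))
    = ((q ^ 2)⁻¹ - 1) *
        ((∏ i ∈ (Finset.Icc 1 n).erase l, (B l - q ^ 2 * B i)) *
          ∏ i ∈ Finset.Icc 1 (n - 2), ((q ^ 2)⁻¹ * B l - D i)) /
        (∏ i ∈ Finset.Icc 1 (n - 1), (B l - q ^ 2 * A i) * ((q ^ 2)⁻¹ * B l - q ^ 2 * A i))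
      - ∑ j ∈ Finset.Icc 1 (n - 1),
        ((∏ i ∈ (Finset.Icc 1 n).erase l, (A j - (q ^ 2)⁻¹ * B i)) *
            ∏ i ∈ Finset.Icc 1 (n - 2), (A j - (q ^ 2)⁻¹ * D i)) /
          (A j * (q ^ 2 * A j - (q ^ 2)⁻¹ * B l) *
            ∏ i ∈ (Finset.Icc 1 (n - 1)).erase j, (A j - A i) * (A j - (q ^ 2)⁻¹ * A i)) := by
  classical
  set c : ℂ := q ^ 2 with hcdef
  have hc : c ≠ 0 := pow_ne_zero 2 hq
  have h1S : (1 : ℕ) ∈ Finset.Icc 1 (n - 1) := by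
    rw [Finset.mem_Icc]; omega
  have hc1 : c ≠ 1 := fun h => hAAq 1 h1S 1 h1S (by rw [h, one_mul])
  have hcm1 : c - 1 ≠ 0 := sub_ne_zero.2 hc1
  set S : Finset ℕ := Finset.Icc 1 (n - 1) with hSdef
  set E : Finset ℕ := (Finset.Icc 1 n).erase l with hEdef
  set Ds : Finset ℕ := Finset.Icc 1 (n - 2) with hDsdef
  set v : ℕ → ℂ := fun k => if k = 0 then c⁻¹ * B l else if k ≤ n - 1 then A k else c * A (k - n)
    with hvdef
  set U : Finset ℕ := S ∪ S.image (· + n) with hUdef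
  set s : Finset ℕ := insert 0 U with hsdef
  have hmemS : ∀ {j : ℕ}, j ∈ S → 1 ≤ j ∧ j ≤ n - 1 := fun hj => Finset.mem_Icc.1 hj
  have hv0 : v 0 = c⁻¹ * B l := by simp [hvdef]
  have hvS : ∀ j ∈ S, v j = A j := by
    intro j hj
    have h := hmemS hj
    have h1 : ¬(j = 0) := by omega
    have h2 : j ≤ n - 1 := by omega
    simp [hvdef, h1, h2]
  have hvT : ∀ j ∈ S, v (j + n) = c * A j := by
    intro j hj
    have := hmemS hj
    have h1 : ¬(j + n = 0) := by omega
    have h2 : ¬(j + n ≤ n - 1) := by omega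
    simp [hvdef, h1, h2, show j ≠ 0 by omega]
  have himg_mem : ∀ {x : ℕ}, x ∈ S.image (· + n) → n + 1 ≤ x ∧ ∃ j ∈ S, x = j + n := by
    intro x hx
    rw [Finset.mem_image] at hx
    obtain ⟨j, hj, rfl⟩ := hx
    exact ⟨by have := hmemS hj; omega, j, hj, rfl⟩
  have h0U : (0 : ℕ) ∉ U := by
    rw [hUdef, Finset.mem_union]
    rintro (h | h)
    · have := hmemS h; omega
    · have := (himg_mem h).1; omega
  have hdisj : Disjoint S (S.image (· + n)) := by
    rw [Finset.disjoint_left]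
    intro a ha hb
    have := hmemS ha
    have := (himg_mem hb).1
    omega
  have hinjadd : ∀ x ∈ S, ∀ y ∈ S, x + n = y + n → x = y := fun x _ y _ h => by omega
  have hcases : ∀ x ∈ s, x = 0 ∨ x ∈ S ∨ ∃ j ∈ S, x = j + n := by
    intro x hx
    rw [hsdef, Finset.mem_insert] at hx
    rcases hx with rfl | hx
    · exact Or.inl rfl
    · rw [hUdef, Finset.mem_union] at hx
      rcases hx with hx | hx
      · exact Or.inr (Or.inl hx)
      · exact Or.inr (Or.inr (himg_mem hx).2)
  have hA0' : ∀ j ∈ S, A j ≠ 0 := hA0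
  -- injectivity of v on s
  have hvs : Set.InjOn v ↑s := by
    intro x hx y hy hxy
    rw [Finset.mem_coe] at hx hy
    rcases hcases x hx with rfl | hxS | ⟨jx, hjx, rfl⟩ <;>
      rcases hcases y hy with rfl | hyS | ⟨jy, hjy, rfl⟩
    · rfl
    · rw [hv0, hvS y hyS] at hxy; exact absurd hxy (hBlA y hyS)
    · rw [hv0, hvT jy hjy] at hxy; exact absurd hxy (hBlAq jy hjy)
    · rw [hv0, hvS x hxS] at hxy; exact absurd hxy.symm (hBlA x hxS)
    · by_contra hne
      rw [hvS x hxS, hvS y hyS] at hxy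
      exact hAA x hxS y hyS hne hxy
    · rw [hvS x hxS, hvT jy hjy] at hxy
      exact absurd hxy (hAAq x hxS jy hjy)
    · rw [hv0, hvT jx hjx] at hxy; exact absurd hxy.symm (hBlAq jx hjx)
    · rw [hvS y hyS, hvT jx hjx] at hxy
      exact absurd hxy.symm (hAAq y hyS jx hjx)
    · rw [hvT jx hjx, hvT jy hjy] at hxy
      have : A jx = A jy := mul_left_cancel₀ hc hxy
      by_contra hne
      exact hAA jx hjx jy hjy (by omega) this
  -- the polynomial
  set P : Polynomial ℂ := Lagrange.nodal E B * Lagrange.nodal Ds D with hPdef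
  have hPeval : ∀ x : ℂ, P.eval x = (∏ i ∈ E, (x - B i)) * ∏ i ∈ Ds, (x - D i) := by
    intro x
    simp [hPdef, Lagrange.eval_nodal]
  have hcardE : E.card = n - 1 := by
    rw [hEdef, Finset.card_erase_of_mem hl, Nat.card_Icc]
    omega
  have hcardS : S.card = n - 1 := by rw [hSdef, Nat.card_Icc]; omega
  have hcardDs : Ds.card = n - 2 := by rw [hDsdef, Nat.card_Icc]; omega
  have hcards : s.card = 2 * n - 1 := by
    rw [hsdef, Finset.card_insert_of_notMem h0U, hUdef, Finset.card_union_of_disjoint hdisj,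
      Finset.card_image_of_injOn (fun x hx y hy h => hinjadd x hx y hy h), hcardS]
    omega
  have hdeg : P.degree < ((s.card : ℕ) - 1 : ℕ) := by
    rw [hPdef, degree_mul, Lagrange.degree_nodal, Lagrange.degree_nodal, hcardE, hcardDs, hcards]
    rw [← Nat.cast_add, Nat.cast_lt]
    omega
  have hkey := sum_div_prod_eq_zero s v hvs P hdeg
  rw [hsdef, Finset.sum_insert h0U, hUdef, Finset.sum_union hdisj,
    Finset.sum_image hinjadd] at hkey
  -- per-term identities
  have hcardSE : ∀ j ∈ S, (S.erase j).card = n - 2 := by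
    intro j hj
    rw [Finset.card_erase_of_mem hj, hcardS]
    omega
  have hpow : c ^ (n - 1) = c * c ^ (n - 2) := by
    rw [← pow_succ']
    congr 1
    omega
  have hfA : ∀ j ∈ S,
      P.eval (v j) / ∏ k ∈ (insert 0 (S ∪ S.image (· + n))).erase j, (v j - v k)
      = c / (c - 1) * (((∏ i ∈ E, (A j - B i)) * ∏ i ∈ Ds, (A j - D i)) /
          (A j * (B l - c * A j) * ∏ i ∈ S.erase j, ((A j - A i) * (A j - c * A i)))) := by
    intro j hj
    have hjb := hmemS hj
    have hj0 : (0 : ℕ) ≠ j := by omega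
    have hjimg : j ∉ S.image (· + n) := fun h => by have := (himg_mem h).1; omega
    have he : (insert 0 (S ∪ S.image (· + n))).erase j
        = insert 0 ((S.erase j) ∪ S.image (· + n)) := by
      rw [Finset.erase_insert_of_ne hj0, Finset.erase_union_distrib,
        Finset.erase_eq_of_notMem hjimg]
    have h0' : (0 : ℕ) ∉ (S.erase j) ∪ S.image (· + n) := by
      rw [Finset.mem_union]
      rintro (h | h)
      · have := hmemS (Finset.mem_of_mem_erase h); omega
      · have := (himg_mem h).1; omega
    have hdisj' : Disjoint (S.erase j) (S.image (· + n)) :=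
      hdisj.mono_left (Finset.erase_subset _ _)
    have e1 : ∏ i ∈ S.erase j, (v j - v i) = ∏ i ∈ S.erase j, (A j - A i) :=
      Finset.prod_congr rfl fun i hi => by
        rw [hvS i (Finset.mem_of_mem_erase hi), hvS j hj]
    have e2 : ∏ i ∈ S, (v j - v (i + n)) = ∏ i ∈ S, (A j - c * A i) :=
      Finset.prod_congr rfl fun i hi => by rw [hvT i hi, hvS j hj]
    rw [he, Finset.prod_insert h0', Finset.prod_union hdisj', Finset.prod_image hinjadd,
      e1, e2, hv0, hvS j hj, hPeval,
      ← Finset.mul_prod_erase S (fun i => A j - c * A i) hj,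
      Finset.prod_mul_distrib]
    refine div_eq_scale_div _ _ _ _ (div_ne_zero hc hcm1) ?_
    field_simp
    ring
  have hfB : ∀ j ∈ S,
      P.eval (v (j + n)) / ∏ k ∈ (insert 0 (S ∪ S.image (· + n))).erase (j + n), (v (j + n) - v k)
      = c / (c - 1) * (((∏ i ∈ E, (A j - c⁻¹ * B i)) * ∏ i ∈ Ds, (A j - c⁻¹ * D i)) /
          (A j * (c * A j - c⁻¹ * B l) * ∏ i ∈ S.erase j, ((A j - A i) * (A j - c⁻¹ * A i)))) := by
    intro j hj
    have hjb := hmemS hj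
    have hjn0 : (0 : ℕ) ≠ j + n := by omega
    have hjnS : j + n ∉ S := fun h => by have := hmemS h; omega
    have he : (insert 0 (S ∪ S.image (· + n))).erase (j + n)
        = insert 0 (S ∪ (S.erase j).image (· + n)) := by
      rw [Finset.erase_insert_of_ne hjn0, Finset.erase_union_distrib,
        Finset.erase_eq_of_notMem hjnS,
        ← Finset.image_erase (add_left_injective n)]
    have h0' : (0 : ℕ) ∉ S ∪ (S.erase j).image (· + n) := by
      rw [Finset.mem_union]
      rintro (h | h)
      · have := hmemS h; omega
      · have := (himg_mem (Finset.mem_of_subset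
          (Finset.image_subset_image (Finset.erase_subset _ _)) h)).1
        omega
    have hdisj' : Disjoint S ((S.erase j).image (· + n)) :=
      hdisj.mono_right (Finset.image_subset_image (Finset.erase_subset _ _))
    have hinjadd' : ∀ x ∈ S.erase j, ∀ y ∈ S.erase j, x + n = y + n → x = y :=
      fun x _ y _ h => by omega
    have e1 : ∏ i ∈ S, (v (j + n) - v i) = ∏ i ∈ S, (c * A j - A i) :=
      Finset.prod_congr rfl fun i hi => by rw [hvS i hi, hvT j hj]
    have e2 : ∏ i ∈ S.erase j, (v (j + n) - v (i + n)) = ∏ i ∈ S.erase j, (c * A j - c * A i) :=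
      Finset.prod_congr rfl fun i hi => by
        rw [hvT i (Finset.mem_of_mem_erase hi), hvT j hj]
    rw [he, Finset.prod_insert h0', Finset.prod_union hdisj', Finset.prod_image hinjadd',
      e1, e2, hv0, hvT j hj, hPeval,
      ← Finset.mul_prod_erase S (fun i => c * A j - A i) hj]
    have hX1 : ∏ i ∈ S.erase j, (c * A j - A i)
        = c ^ (n - 2) * ∏ i ∈ S.erase j, (A j - c⁻¹ * A i) := by
      rw [← hcardSE j hj]
      exact prod_scale _ _ _ _ (fun i _ => by rw [mul_sub, mul_inv_cancel_left₀ hc])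
    have hX2 : ∏ i ∈ S.erase j, (c * A j - c * A i)
        = c ^ (n - 2) * ∏ i ∈ S.erase j, (A j - A i) := by
      rw [← hcardSE j hj]
      exact prod_scale _ _ _ _ (fun i _ => by ring)
    have hNum : (∏ i ∈ E, (c * A j - B i)) * ∏ i ∈ Ds, (c * A j - D i)
        = (c ^ (n - 1) * c ^ (n - 2)) *
          ((∏ i ∈ E, (A j - c⁻¹ * B i)) * ∏ i ∈ Ds, (A j - c⁻¹ * D i)) := by
      rw [show (∏ i ∈ E, (c * A j - B i)) = c ^ (n - 1) * ∏ i ∈ E, (A j - c⁻¹ * B i) by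
          rw [← hcardE]; exact prod_scale _ _ _ _ (fun i _ => by rw [mul_sub, mul_inv_cancel_left₀ hc]),
        show (∏ i ∈ Ds, (c * A j - D i)) = c ^ (n - 2) * ∏ i ∈ Ds, (A j - c⁻¹ * D i) by
          rw [← hcardDs]; exact prod_scale _ _ _ _ (fun i _ => by rw [mul_sub, mul_inv_cancel_left₀ hc])]
      ring
    rw [hX1, hX2, hNum, Finset.prod_mul_distrib]
    refine div_eq_scale_div' _ _ _ _ _
      (mul_ne_zero (pow_ne_zero _ hc) (pow_ne_zero _ hc)) (div_ne_zero hc hcm1) ?_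
    rw [hpow]
    field_simp
  -- the pole at c⁻¹ * B l
  have hf0eq : P.eval (v 0) / ∏ k ∈ (insert 0 (S ∪ S.image (· + n))).erase 0, (v 0 - v k)
      = ((∏ i ∈ E, (c⁻¹ * B l - B i)) * ∏ i ∈ Ds, (c⁻¹ * B l - D i)) /
        ((∏ i ∈ S, (c⁻¹ * B l - A i)) * ∏ i ∈ S, (c⁻¹ * B l - c * A i)) := by
    have e1 : ∏ i ∈ S, (v 0 - v i) = ∏ i ∈ S, (c⁻¹ * B l - A i) :=
      Finset.prod_congr rfl fun i hi => by rw [hvS i hi, hv0]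
    have e2 : ∏ i ∈ S, (v 0 - v (i + n)) = ∏ i ∈ S, (c⁻¹ * B l - c * A i) :=
      Finset.prod_congr rfl fun i hi => by rw [hvT i hi, hv0]
    rw [Finset.erase_insert h0U, Finset.prod_union hdisj, Finset.prod_image hinjadd,
      e1, e2, hPeval, hv0]
  have hRHS1 : ((c⁻¹ - 1) *
        ((∏ i ∈ E, (B l - c * B i)) * ∏ i ∈ Ds, (c⁻¹ * B l - D i)) /
        (∏ i ∈ S, ((B l - c * A i) * (c⁻¹ * B l - c * A i))))
      = (c⁻¹ - 1) *
        (((∏ i ∈ E, (c⁻¹ * B l - B i)) * ∏ i ∈ Ds, (c⁻¹ * B l - D i)) /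
          ((∏ i ∈ S, (c⁻¹ * B l - A i)) * ∏ i ∈ S, (c⁻¹ * B l - c * A i))) := by
    rw [show (∏ i ∈ E, (B l - c * B i)) = c ^ (n - 1) * ∏ i ∈ E, (c⁻¹ * B l - B i) by
        rw [← hcardE]; exact prod_scale _ _ _ _ (fun i _ => by rw [mul_sub, mul_inv_cancel_left₀ hc]),
      Finset.prod_mul_distrib,
      show (∏ i ∈ S, (B l - c * A i)) = c ^ (n - 1) * ∏ i ∈ S, (c⁻¹ * B l - A i) by
        rw [← hcardS]; exact prod_scale _ _ _ _ (fun i _ => by rw [mul_sub, mul_inv_cancel_left₀ hc]),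
      mul_assoc (c ^ (n - 1)), mul_assoc (c ^ (n - 1))]
    exact scale_cancel _ _ _ _ (pow_ne_zero _ hc)
  rw [hf0eq, Finset.sum_congr rfl hfA, Finset.sum_congr rfl hfB,
    ← Finset.mul_sum, ← Finset.mul_sum] at hkey
  rw [hRHS1]
  rw [eq_neg_of_add_eq_zero_left hkey]
  have key : (c⁻¹ - 1) * (c / (c - 1)) = -1 := by
    rw [mul_div_assoc', div_eq_iff hcm1, sub_mul, inv_mul_cancel₀ hc]; ring
  have key2 : ∀ a b : ℂ, (c⁻¹ - 1) * -(c / (c - 1) * a + c / (c - 1) * b) = a + b := by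
    intro a b; linear_combination (-(a + b)) * key
  rw [key2]
  ring
end
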